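/- Let κ be strongly inaccessible and let b : κ → κ satisfy 2 ≤ b(α) for every α < κ. If {α < κ : b(α) < ℵ₀} is cofinal in κ, then d_κ^b(≠^∞) = 2^κ, and moreover d_κ^{b,h}(∌^∞) = 2^κ for every h : κ → κ with 2 ≤ h(α) ≤ b(α) for all α < κ. -/

import Mathlib

open Cardinal Set

namespace BGBS

/-- `P` holds for almost all `α < κ`, i.e. for all `α` above some `β < κ`. -/
def AlmostAll (κ : Ordinal.{0}) (P : Ordinal.{0} → Prop) : Prop :=
  ∃ β < κ, ∀ α, β < α → α < κ → P α

/-- `P` holds for cofinally many `α < κ`. -/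
def Cofinally (κ : Ordinal.{0}) (P : Ordinal.{0} → Prop) : Prop :=
  ∀ β < κ, ∃ α, β < α ∧ α < κ ∧ P α

/-- The set `{α < κ | P α}` is bounded in `κ`. -/
def BoundedIn (κ : Ordinal.{0}) (P : Ordinal.{0} → Prop) : Prop :=
  ∃ β < κ, ∀ α, α < κ → P α → α < β

/-- An ordinal which is (the initial ordinal of) an infinite cardinal. -/
def IsInfCard (o : Ordinal.{0}) : Prop := o.card.ord = o ∧ ℵ₀ ≤ o.card

/-- An ordinal which is (the initial ordinal of) a cardinal. -/
def IsCardOrd (o : Ordinal.{0}) : Prop := o.card.ord = o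

/-- The bounded product space `∏ b`: functions on `κ` with `f α < b α`
(and value `0` outside of `κ`, for definiteness). -/
def prodSet (κ : Ordinal.{0}) (b : Ordinal.{0} → Ordinal.{0}) :
    Set (Ordinal.{0} → Ordinal.{0}) :=
  {f | ∀ α, (α < κ → f α < b α) ∧ (¬ α < κ → f α = 0)}

/-- `f ≤* g` : `f α ≤ g α` for almost all `α < κ`. -/
def leStar (κ : Ordinal.{0}) (f g : Ordinal.{0} → Ordinal.{0}) : Prop :=
  AlmostAll κ fun α => f α ≤ g α

/-- `f α ≠ g α` for almost all `α < κ` (eventual difference). -/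
def neStar (κ : Ordinal.{0}) (f g : Ordinal.{0} → Ordinal.{0}) : Prop :=
  AlmostAll κ fun α => f α ≠ g α

/-- `f =^∞ g` : `f α = g α` for cofinally many `α < κ`. -/
def eqInfty (κ : Ordinal.{0}) (f g : Ordinal.{0} → Ordinal.{0}) : Prop :=
  Cofinally κ fun α => f α = g α

/-- The set of `(b,h)`-slaloms: `φ α ⊆ b α` and `|φ α| < h α` for `α < κ`
(and `φ α = ∅` outside of `κ`, for definiteness). -/
def slalomSet (κ : Ordinal.{0}) (b h : Ordinal.{0} → Ordinal.{0}) :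
    Set (Ordinal.{0} → Set Ordinal.{0}) :=
  {φ | ∀ α, (α < κ → φ α ⊆ Iio (b α) ∧ #(φ α) < Cardinal.lift.{1} (h α).card)
      ∧ (¬ α < κ → φ α = ∅)}

/-- `f ∈* φ` : `f α ∈ φ α` for almost all `α < κ`. -/
def inStar (κ : Ordinal.{0}) (f : Ordinal.{0} → Ordinal.{0})
    (φ : Ordinal.{0} → Set Ordinal.{0}) : Prop :=
  AlmostAll κ fun α => f α ∈ φ α

/-- `f ∈^∞ φ` : `f α ∈ φ α` for cofinally many `α < κ`. -/
def inInfty (κ : Ordinal.{0}) (f : Ordinal.{0} → Ordinal.{0})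
    (φ : Ordinal.{0} → Set Ordinal.{0}) : Prop :=
  Cofinally κ fun α => f α ∈ φ α

/-- `f α ∉ φ α` for almost all `α < κ` (the antilocalisation relation). -/
def notInStar (κ : Ordinal.{0}) (φ : Ordinal.{0} → Set Ordinal.{0})
    (f : Ordinal.{0} → Ordinal.{0}) : Prop :=
  AlmostAll κ fun α => f α ∉ φ α

/-- The norm of the relational system `⟨Xs, Ys, R⟩`: the least cardinality of a
set `W ⊆ Ys` such that every `x ∈ Xs` is `R`-related to some member of `W`. -/
noncomputable def normOf {X : Type*} {Y : Type*} (Xs : Set X) (Ys : Set Y)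
    (R : X → Y → Prop) : Cardinal :=
  sInf { c | ∃ W, W ⊆ Ys ∧ (∀ x ∈ Xs, ∃ y ∈ W, R x y) ∧ c = #W }

/-- A Tukey connection between set-based relational systems. -/
def Tukey {X Y X' Y' : Type*} (Xs : Set X) (Ys : Set Y) (R : X → Y → Prop)
    (Xs' : Set X') (Ys' : Set Y') (R' : X' → Y' → Prop) : Prop :=
  ∃ (ρm : X → X') (ρp : Y' → Y),
    (∀ x ∈ Xs, ρm x ∈ Xs') ∧ (∀ y' ∈ Ys', ρp y' ∈ Ys) ∧
    ∀ x ∈ Xs, ∀ y' ∈ Ys', R' (ρm x) y' → R x (ρp y')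

/-- The dominating number `d_κ^b(≤*)`. -/
noncomputable def dLeq (κ : Ordinal.{0}) (b : Ordinal.{0} → Ordinal.{0}) : Cardinal.{1} :=
  normOf (prodSet κ b) (prodSet κ b) (leStar κ)

/-- The unbounding number `b_κ^b(≤*)`. -/
noncomputable def bLeq (κ : Ordinal.{0}) (b : Ordinal.{0} → Ordinal.{0}) : Cardinal.{1} :=
  normOf (prodSet κ b) (prodSet κ b) fun g f => ¬ leStar κ f g

/-- The eventual difference number `d_κ^b(≠^∞)`. -/
noncomputable def dNeq (κ : Ordinal.{0}) (b : Ordinal.{0} → Ordinal.{0}) : Cardinal.{1} :=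
  normOf (prodSet κ b) (prodSet κ b) (neStar κ)

/-- The cofinal equality number `b_κ^b(≠^∞)`. -/
noncomputable def bNeq (κ : Ordinal.{0}) (b : Ordinal.{0} → Ordinal.{0}) : Cardinal.{1} :=
  normOf (prodSet κ b) (prodSet κ b) fun g f => eqInfty κ g f

/-- The localisation number `d_κ^{b,h}(∈*)`. -/
noncomputable def dLoc (κ : Ordinal.{0}) (b h : Ordinal.{0} → Ordinal.{0}) : Cardinal.{1} :=
  normOf (prodSet κ b) (slalomSet κ b h) (inStar κ)

/-- The avoidance number `b_κ^{b,h}(∈*)`. -/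
noncomputable def bLoc (κ : Ordinal.{0}) (b h : Ordinal.{0} → Ordinal.{0}) : Cardinal.{1} :=
  normOf (slalomSet κ b h) (prodSet κ b) fun φ f => ¬ inStar κ f φ

/-- The anti-avoidance number `d_κ^{b,h}(∌^∞)`. -/
noncomputable def dAntiLoc (κ : Ordinal.{0}) (b h : Ordinal.{0} → Ordinal.{0}) : Cardinal.{1} :=
  normOf (slalomSet κ b h) (prodSet κ b) (notInStar κ)

/-- The antilocalisation number `b_κ^{b,h}(∌^∞)`. -/
noncomputable def bAntiLoc (κ : Ordinal.{0}) (b h : Ordinal.{0} → Ordinal.{0}) : Cardinal.{1} :=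
  normOf (prodSet κ b) (slalomSet κ b h) (inInfty κ)

/-- `b` is increasing (below `κ`). -/
def IncreasingOn (κ : Ordinal.{0}) (b : Ordinal.{0} → Ordinal.{0}) : Prop :=
  ∀ α β, α ≤ β → β < κ → b α ≤ b β

/-- `f` is continuous at every limit ordinal of `A` (below `κ`). -/
def ContinuousOn (κ : Ordinal.{0}) (f : Ordinal.{0} → Ordinal.{0}) (A : Set Ordinal.{0}) : Prop :=
  ∀ γ ∈ A, γ < κ → Order.IsSuccLimit γ → f γ = sSup (f '' Iio γ)

/-- `f` is discontinuous at every limit ordinal of `A` (below `κ`). -/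
def DiscontinuousOn (κ : Ordinal.{0}) (f : Ordinal.{0} → Ordinal.{0}) (A : Set Ordinal.{0}) : Prop :=
  ∀ γ ∈ A, γ < κ → Order.IsSuccLimit γ → sSup (f '' Iio γ) < f γ

/-- `C` is club in `κ`: unbounded, and containing the supremum of each of its
bounded nonempty subsets without a maximum. -/
def IsClubIn (C : Set Ordinal.{0}) (κ : Ordinal.{0}) : Prop :=
  C ⊆ Iio κ ∧ (∀ β < κ, ∃ α ∈ C, β < α) ∧
    ∀ S, S ⊆ C → S.Nonempty → (∃ β < κ, ∀ x ∈ S, x ≤ β) → sSup S ∉ S → sSup S ∈ C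

/-- `S` is stationary in `κ`: it meets every club subset of `κ`. -/
def IsStationaryIn (S : Set Ordinal.{0}) (κ : Ordinal.{0}) : Prop :=
  S ⊆ Iio κ ∧ ∀ C, IsClubIn C κ → (S ∩ C).Nonempty

/-- An almost disjoint family in `∏ b`. -/
def AlmostDisjointFamily (κ : Ordinal.{0}) (b : Ordinal.{0} → Ordinal.{0})
    (A : Set (Ordinal.{0} → Ordinal.{0})) : Prop :=
  A ⊆ prodSet κ b ∧ ∀ f ∈ A, ∀ g ∈ A, f ≠ g → AlmostAll κ fun α => f α ≠ g α

section Stmt10Aux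

/-- Truncation of a set of ordinals below `o` to coordinates `≤ j`. -/
def truncS {o : Ordinal.{0}} (j : Ordinal.{0}) (x : Set (Iio o)) : Set (Iio o) :=
  {i | i ∈ x ∧ (i : Ordinal) ≤ j}

/-- Nodes of level `j`: truncated sets. -/
def NodeT (o j : Ordinal.{0}) : Type 1 :=
  {y : Set (Iio o) // ∀ i ∈ y, (i : Ordinal) ≤ j}

/-- Index type for the kill-coordinates: a level `j < o` together with an
`n`-tuple of nodes of level `j`. -/
def IdxT (o : Ordinal.{0}) (n : ℕ) : Type 1 :=
  (j : ↥(Iio o)) × (Fin n → NodeT o j.1)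

open Classical in
/-- The pattern value of a branch `x` at the kill-coordinate indexed by `r`. -/
noncomputable def valAt (o : Ordinal.{0}) (n : ℕ) (r : IdxT o n) (x : Set (Iio o)) :
    Ordinal.{0} :=
  if h2 : ∃ m : ℕ, ∃ hm : m < n, truncS r.1.1 x = (r.2 ⟨m, hm⟩).1
  then (Nat.find h2 : Ordinal) else 0

open Classical in
/-- The function attached to the branch `x`. -/
noncomputable def FF (o : Ordinal.{0}) (n : ℕ) (ι : IdxT o n ↪ ↥(Iio o))
    (x : Set (Iio o)) (α : Ordinal.{0}) : Ordinal.{0} :=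
  if h : ∃ r : IdxT o n, ((ι r : ↥(Iio o)) : Ordinal) = α then valAt o n h.choose x else 0

lemma valAt_lt {o : Ordinal.{0}} {n : ℕ} (hn : 0 < n) (r : IdxT o n) (x : Set (Iio o)) :
    valAt o n r x < (n : Ordinal) := by
  classical
  unfold valAt
  split_ifs with h2
  · obtain ⟨hm, -⟩ := Nat.find_spec h2
    exact_mod_cast hm
  · exact_mod_cast hn

lemma FF_apply {o : Ordinal.{0}} {n : ℕ} (ι : IdxT o n ↪ ↥(Iio o)) (r : IdxT o n)
    (x : Set (Iio o)) : FF o n ι x ((ι r : ↥(Iio o)) : Ordinal) = valAt o n r x := by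
  unfold FF
  have h : ∃ r' : IdxT o n, ((ι r' : ↥(Iio o)) : Ordinal) = ((ι r : ↥(Iio o)) : Ordinal) :=
    ⟨r, rfl⟩
  rw [dif_pos h]
  exact congrArg (fun r' => valAt o n r' x) (ι.injective (Subtype.ext h.choose_spec))

lemma FF_mem_prodSet {κ : Cardinal.{0}} {b : Ordinal.{0} → Ordinal.{0}}
    (hb : ∀ α < κ.ord, (2:Ordinal) ≤ b α) {n : ℕ} (hn : 0 < n)
    (ι : IdxT κ.ord n ↪ ↥(Iio κ.ord))
    (hι : ∀ r, b ((ι r : ↥(Iio κ.ord)) : Ordinal) = (n : Ordinal))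
    (x : Set (Iio κ.ord)) : FF κ.ord n ι x ∈ prodSet κ.ord b := by
  intro α
  constructor
  · intro hα
    unfold FF
    split_ifs with h
    · have h1 : ((ι h.choose : ↥(Iio κ.ord)) : Ordinal) = α := h.choose_spec
      have h2 : b α = (n : Ordinal) := by rw [← h1]; exact hι h.choose
      rw [h2]
      exact valAt_lt hn _ _
    · exact lt_of_lt_of_le (by norm_num) (hb α hα)
  · intro hα
    unfold FF
    rw [dif_neg]
    rintro ⟨r, hr⟩
    exact hα (hr ▸ (ι r).2)

lemma exists_nstar {κ : Cardinal.{0}} (hκ : κ.IsInaccessible) {b : Ordinal.{0} → Ordinal.{0}}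
    (hb : ∀ α < κ.ord, (2:Ordinal) ≤ b α)
    (hfin : Cofinally κ.ord fun α => b α < Ordinal.omega0) :
    ∃ n : ℕ, 2 ≤ n ∧ Cofinally κ.ord fun α => b α = (n : Ordinal) := by
  by_contra hcon
  push_neg at hcon
  have hbnd : ∀ m : ℕ, ∃ β, β < κ.ord ∧ ∀ α, β < α → α < κ.ord → b α ≠ (m : Ordinal) := by
    intro m
    rcases lt_or_ge m 2 with hm | hm
    · refine ⟨0, ?_, ?_⟩
      · rw [Cardinal.lt_ord]
        simpa using aleph0_pos.trans_le hκ.1.le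
      · intro α _ hα hbα
        have := hb α hα
        rw [hbα] at this
        have : (2:ℕ) ≤ m := by exact_mod_cast this
        omega
    · have h1 := hcon m hm
      unfold Cofinally at h1
      push_neg at h1
      obtain ⟨β, hβ, h2⟩ := h1
      exact ⟨β, hβ, h2⟩
  choose βs hβs hβs2 using hbnd
  have hsup : iSup βs < κ.ord := by
    apply Cardinal.iSup_lt_ord_of_isRegular hκ.isRegular
    · simpa using hκ.1
    · exact hβs
  obtain ⟨α, hα1, hα2, hα3⟩ := hfin (iSup βs) hsup
  obtain ⟨m, hm⟩ := Ordinal.lt_omega0.mp hα3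
  have hm2 : 2 ≤ m := by
    have := hb α hα2
    rw [hm] at this
    exact_mod_cast this
  exact hβs2 m α (lt_of_le_of_lt (le_ciSup (Ordinal.bddAbove_range βs) m) hα1) hα2 hm

lemma pow_lt_of_lt_card {c d : Cardinal.{1}} (hd : ℵ₀ ≤ d) (hc : c < d) (n : ℕ) : c ^ n < d := by
  induction n with
  | zero => simpa using lt_of_lt_of_le one_lt_aleph0 hd
  | succ k ih =>
    rw [pow_succ]
    exact Cardinal.mul_lt_of_lt hd ih hc

lemma mk_le_init {κ : Cardinal.{0}} (hκ : ℵ₀ ≤ κ) {γ : Ordinal.{0}} (hγ : γ < κ.ord) :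
    #{c : ↥(Iio κ.ord) // (c : Ordinal) ≤ γ} < Cardinal.lift.{1} κ := by
  have hγ1 : γ + 1 < κ.ord := by
    rw [Ordinal.add_one_eq_succ]
    exact (Cardinal.isSuccLimit_ord hκ).succ_lt hγ
  have hinj : Function.Injective (fun c : {c : ↥(Iio κ.ord) // (c : Ordinal) ≤ γ} =>
      (⟨(c : Ordinal), by
        rw [mem_Iio, Ordinal.add_one_eq_succ, Order.lt_succ_iff]; exact c.2⟩ :
        ↥(Iio (γ + 1)))) := by
    intro c c' hcc'
    have h2 := congrArg (fun x : ↥(Iio (γ + 1)) => (x : Ordinal)) hcc'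
    dsimp only at h2
    exact Subtype.ext (Subtype.ext h2)
  calc #{c : ↥(Iio κ.ord) // (c : Ordinal) ≤ γ} ≤ #(↥(Iio (γ + 1))) :=
        Cardinal.mk_le_of_injective hinj
    _ = Cardinal.lift.{1} (γ + 1).card := Ordinal.mk_Iio_ordinal _
    _ < Cardinal.lift.{1} κ := Cardinal.lift_lt.mpr (Cardinal.lt_ord.mp hγ1)

lemma mk_tail {κ : Cardinal.{0}} (hκ : ℵ₀ ≤ κ) {γ : Ordinal.{0}} (hγ : γ < κ.ord) :
    Cardinal.lift.{1} κ ≤ #{c : ↥(Iio κ.ord) // γ ≤ (c : Ordinal)} := by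
  by_contra hcon
  push_neg at hcon
  have hinj : Function.Injective
      (fun c : ↥(Iio κ.ord) =>
        if h : (c : Ordinal) ≤ γ
        then (Sum.inl ⟨c, h⟩ : {c : ↥(Iio κ.ord) // (c : Ordinal) ≤ γ} ⊕
            {c : ↥(Iio κ.ord) // γ ≤ (c : Ordinal)})
        else Sum.inr ⟨c, (le_of_not_ge h)⟩) := by
    intro a b hab
    by_cases h1 : (a : Ordinal) ≤ γ <;> by_cases h2 : (b : Ordinal) ≤ γ <;>
      simp [h1, h2] at hab <;> exact hab
  have hsplit := Cardinal.mk_le_of_injective hinj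
  rw [Cardinal.mk_sum, Cardinal.lift_id, Cardinal.lift_id, Ordinal.mk_Iio_ordinal,
    Cardinal.card_ord] at hsplit
  exact absurd hsplit (not_le.mpr (Cardinal.add_lt_of_lt
    (Cardinal.aleph0_le_lift.mpr hκ) (mk_le_init hκ hγ) hcon))

lemma mk_IdxT_le {κ : Cardinal.{0}} (hκ : κ.IsInaccessible) (n : ℕ) :
    #(IdxT κ.ord n) ≤ Cardinal.lift.{1} κ := by
  have haleph : ℵ₀ ≤ Cardinal.lift.{1} κ := Cardinal.aleph0_le_lift.mpr hκ.1.le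
  have hNode : ∀ j : ↥(Iio κ.ord), #(NodeT κ.ord j.1) < Cardinal.lift.{1} κ := by
    intro j
    have e1 : #(NodeT κ.ord j.1) ≤ #(Set {i : ↥(Iio κ.ord) // (i : Ordinal) ≤ j.1}) := by
      apply Cardinal.mk_le_of_injective
        (f := fun y => {i : {i : ↥(Iio κ.ord) // (i : Ordinal) ≤ (j : Ordinal)} | i.1 ∈ y.1})
      intro y z hyz
      have hyz2 : {i : {i : ↥(Iio κ.ord) // (i : Ordinal) ≤ (j : Ordinal)} | i.1 ∈ y.1} =
          {i : {i : ↥(Iio κ.ord) // (i : Ordinal) ≤ (j : Ordinal)} | i.1 ∈ z.1} := hyz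
      apply Subtype.ext
      ext i
      constructor
      · intro hi
        have h1 : (⟨i, y.2 i hi⟩ : {i : ↥(Iio κ.ord) // (i : Ordinal) ≤ (j : Ordinal)}) ∈
            {i : {i : ↥(Iio κ.ord) // (i : Ordinal) ≤ (j : Ordinal)} | i.1 ∈ y.1} := hi
        rw [hyz2] at h1
        exact h1
      · intro hi
        have h1 : (⟨i, z.2 i hi⟩ : {i : ↥(Iio κ.ord) // (i : Ordinal) ≤ (j : Ordinal)}) ∈
            {i : {i : ↥(Iio κ.ord) // (i : Ordinal) ≤ (j : Ordinal)} | i.1 ∈ z.1} := hi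
        rw [← hyz2] at h1
        exact h1
    have e2 : #(Set {i : ↥(Iio κ.ord) // (i : Ordinal) ≤ j.1}) < Cardinal.lift.{1} κ := by
      rw [Cardinal.mk_set]
      have h3 : #{i : ↥(Iio κ.ord) // (i : Ordinal) ≤ j.1} < Cardinal.lift.{1} κ :=
        mk_le_init hκ.1.le j.2
      obtain ⟨c, hc, hceq⟩ := Cardinal.lt_lift_iff.mp h3
      rw [← hceq, ← Cardinal.lift_two_power, Cardinal.lift_lt]
      exact hκ.isStrongLimit.two_power_lt hc
    exact lt_of_le_of_lt e1 e2
  have hFin : ∀ j : ↥(Iio κ.ord), #(Fin n → NodeT κ.ord j.1) ≤ Cardinal.lift.{1} κ := by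
    intro j
    have e3 : (Fin n → NodeT κ.ord j.1) ≃ (ULift.{1} (Fin n) → NodeT κ.ord j.1) :=
      Equiv.arrowCongr Equiv.ulift.symm (Equiv.refl _)
    rw [mk_congr e3, ← Cardinal.power_def, Cardinal.mk_uLift, Cardinal.mk_fin,
      Cardinal.lift_natCast, Cardinal.power_natCast]
    exact (pow_lt_of_lt_card haleph (hNode j) n).le
  calc #(IdxT κ.ord n) = Cardinal.sum fun j : ↥(Iio κ.ord) => #(Fin n → NodeT κ.ord j.1) :=
        Cardinal.mk_sigma _
    _ ≤ Cardinal.sum fun _ : ↥(Iio κ.ord) => Cardinal.lift.{1} κ :=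
        Cardinal.sum_le_sum _ _ hFin
    _ = #(↥(Iio κ.ord)) * Cardinal.lift.{1} κ := Cardinal.sum_const' _ _
    _ = Cardinal.lift.{1} κ * Cardinal.lift.{1} κ := by
        rw [Ordinal.mk_Iio_ordinal, Cardinal.card_ord]
    _ = Cardinal.lift.{1} κ := Cardinal.mul_eq_self haleph

lemma lift_le_mk_T {κ : Cardinal.{0}} (hκ : κ.IsInaccessible) {b : Ordinal.{0} → Ordinal.{0}}
    {n : ℕ} (hcof : Cofinally κ.ord fun α => b α = (n : Ordinal)) :
    Cardinal.lift.{1} κ ≤ #{c : ↥(Iio κ.ord) // b (c : Ordinal) = (n : Ordinal)} := by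
  by_contra hcon
  push_neg at hcon
  obtain ⟨c₀, hc₀lt, hc₀eq⟩ := Cardinal.lt_lift_iff.mp hcon
  have hmk : Cardinal.lift.{1} #(Quotient.out c₀) =
      Cardinal.lift.{0} #{c : ↥(Iio κ.ord) // b (c : Ordinal) = (n : Ordinal)} := by
    rw [Cardinal.mk_out, Cardinal.lift_uzero]
    exact hc₀eq
  obtain ⟨e⟩ := Cardinal.lift_mk_eq'.mp hmk
  set f : Quotient.out c₀ → Ordinal.{0} := fun i => ((e i).1 : Ordinal) with hf
  have hsup : iSup f < κ.ord := by
    apply Cardinal.iSup_lt_ord_of_isRegular hκ.isRegular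
    · rw [Cardinal.mk_out]; exact hc₀lt
    · intro i; exact (e i).1.2
  obtain ⟨α, hα1, hα2, hα3⟩ := hcof (iSup f) hsup
  have : α ≤ iSup f := by
    have h5 : f (e.symm ⟨⟨α, hα2⟩, hα3⟩) = α := by
      rw [hf]; simp
    rw [← h5]
    exact le_ciSup (Ordinal.bddAbove_range f) _
  exact absurd hα1 (not_lt.mpr this)

end Stmt10Aux
section Stmt10Key

lemma key_not_all {κ : Cardinal.{0}} (hκ : κ.IsInaccessible) {b : Ordinal.{0} → Ordinal.{0}}
    {n : ℕ} (hn : 2 ≤ n) (ι : IdxT κ.ord n ↪ ↥(Iio κ.ord))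
    (hι : ∀ r, b ((ι r : ↥(Iio κ.ord)) : Ordinal) = (n : Ordinal))
    {g : Ordinal.{0} → Ordinal.{0}} (hg : ∀ α < κ.ord, g α < b α)
    {β : Ordinal.{0}} (hβ : β < κ.ord)
    {u : Fin n → Set (Iio κ.ord)} (hu : Function.Injective u)
    (hall : ∀ k α, β < α → α < κ.ord → FF κ.ord n ι (u k) α ≠ g α) : False := by
  classical
  have hκ0 : (0:Ordinal) < κ.ord := by
    rw [Cardinal.lt_ord]
    simpa using aleph0_pos.trans_le hκ.1.le
  -- separation witnesses
  have hsep : ∀ p : Fin n × Fin n, p.1 ≠ p.2 →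
      ∃ i : ↥(Iio κ.ord), ¬ (i ∈ u p.1 ↔ i ∈ u p.2) := by
    intro p hp
    by_contra hcon
    push_neg at hcon
    exact hp (hu (Set.ext fun i => by
      have := hcon i
      tauto))
  -- bound on the separation level
  set j₀ : Ordinal.{0} := (Finset.univ : Finset (Fin n × Fin n)).sup
    (fun p => if h : p.1 ≠ p.2 then ((hsep p h).choose : Ordinal) else 0) with hj₀def
  have hj₀ : j₀ < κ.ord := by
    rw [hj₀def]
    apply Finset.sup_lt_iff hκ0 |>.mpr
    intro p _
    split_ifs with h
    · exact ((hsep p h).choose).2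
    · exact hκ0
  -- distinct truncations above j₀
  have htr : ∀ j : Ordinal.{0}, j₀ ≤ j → ∀ k k' : Fin n, k ≠ k' →
      truncS j (u k) ≠ truncS j (u k') := by
    intro j hj k k' hkk' heq
    have hle : (((hsep (k, k') hkk').choose : ↥(Iio κ.ord)) : Ordinal) ≤ j := by
      refine le_trans ?_ hj
      rw [hj₀def]
      have := Finset.le_sup (f := fun p : Fin n × Fin n =>
        if h : p.1 ≠ p.2 then ((hsep p h).choose : Ordinal) else 0)
        (Finset.mem_univ (k, k'))
      dsimp only at this
      rwa [dif_pos hkk'] at this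
    apply (hsep (k, k') hkk').choose_spec
    set i := (hsep (k, k') hkk').choose
    constructor
    · intro hi
      have h1 : i ∈ truncS j (u k) := ⟨hi, hle⟩
      rw [heq] at h1
      exact h1.1
    · intro hi
      have h1 : i ∈ truncS j (u k') := ⟨hi, hle⟩
      rw [← heq] at h1
      exact h1.1
  -- the kill indices above level j₀
  set rmap : {j : ↥(Iio κ.ord) // j₀ ≤ (j : Ordinal)} → IdxT κ.ord n :=
    fun j => ⟨j.1, fun k => ⟨truncS (j : Ordinal) (u k), fun i hi => hi.2⟩⟩ with hrmap
  -- find a kill coordinate above β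
  have hfind : ∃ j : {j : ↥(Iio κ.ord) // j₀ ≤ (j : Ordinal)},
      β < ((ι (rmap j) : ↥(Iio κ.ord)) : Ordinal) := by
    by_contra hcon
    push_neg at hcon
    have hinj : Function.Injective
        (fun j : {j : ↥(Iio κ.ord) // j₀ ≤ (j : Ordinal)} =>
          (⟨ι (rmap j), hcon j⟩ : {c : ↥(Iio κ.ord) // (c : Ordinal) ≤ β})) := by
      intro a a' haa'
      have h1 : ι (rmap a) = ι (rmap a') := by
        exact Subtype.ext_iff.mp haa'
      have h2 : rmap a = rmap a' := ι.injective h1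
      have h3 : (rmap a).1 = (rmap a').1 := by rw [h2]
      rw [hrmap] at h3
      exact Subtype.ext h3
    have hle := Cardinal.mk_le_of_injective hinj
    exact absurd ((mk_tail hκ.1.le hj₀).trans hle) (not_le.mpr (mk_le_init hκ.1.le hβ))
  obtain ⟨j, hjβ⟩ := hfind
  set α : Ordinal.{0} := ((ι (rmap j) : ↥(Iio κ.ord)) : Ordinal) with hαdef
  have hα : α < κ.ord := (ι (rmap j)).2
  have hbα : b α = (n : Ordinal) := hι (rmap j)
  have hgα : g α < (n : Ordinal) := hbα ▸ hg α hα
  obtain ⟨m, hm⟩ := Ordinal.lt_omega0.mp (lt_trans hgα (Ordinal.nat_lt_omega0 n))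
  have hmn : m < n := by
    rw [hm] at hgα
    exact_mod_cast hgα
  set k : Fin n := ⟨m, hmn⟩ with hkdef
  -- compute FF (u k) α
  have hval : valAt κ.ord n (rmap j) (u k) = (m : Ordinal) := by
    unfold valAt
    have hex : ∃ m' : ℕ, ∃ hm' : m' < n,
        truncS (rmap j).1.1 (u k) = ((rmap j).2 ⟨m', hm'⟩).1 := ⟨m, hmn, rfl⟩
    rw [dif_pos hex]
    have hfind_eq : Nat.find hex = m := by
      rw [Nat.find_eq_iff]
      refine ⟨⟨hmn, rfl⟩, ?_⟩
      rintro m' hm'm ⟨hm'n, heq⟩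
      have hkne : k ≠ (⟨m', hm'n⟩ : Fin n) := by
        rw [hkdef]
        intro hcontra
        have : m = m' := by simpa using congrArg Fin.val hcontra
        omega
      exact htr (rmap j).1.1 j.2 k ⟨m', hm'n⟩ hkne heq
    rw [hfind_eq]
  have hFF : FF κ.ord n ι (u k) α = (m : Ordinal) := by
    rw [hαdef, FF_apply ι (rmap j) (u k)]
    exact hval
  exact hall k α hjβ hα (by rw [hFF, hm])

lemma key_card {κ : Cardinal.{0}} (hκ : κ.IsInaccessible) {b : Ordinal.{0} → Ordinal.{0}}
    {n : ℕ} (hn : 2 ≤ n) (ι : IdxT κ.ord n ↪ ↥(Iio κ.ord))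
    (hι : ∀ r, b ((ι r : ↥(Iio κ.ord)) : Ordinal) = (n : Ordinal))
    {W : Set (Ordinal.{0} → Ordinal.{0})} (hW : W ⊆ prodSet κ.ord b)
    (hcov : ∀ x : Set (Iio κ.ord), ∃ g ∈ W, ∃ β < κ.ord,
      ∀ α, β < α → α < κ.ord → FF κ.ord n ι x α ≠ g α) :
    Cardinal.lift.{1} (2 ^ κ) ≤ #W := by
  classical
  by_contra hlt
  push_neg at hlt
  have haleph : ℵ₀ ≤ Cardinal.lift.{1} κ := Cardinal.aleph0_le_lift.mpr hκ.1.le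
  have h2κ : Cardinal.lift.{1} (2 ^ κ) = 2 ^ Cardinal.lift.{1} κ :=
    Cardinal.lift_two_power κ
  choose gf hgW βf hβf hprop using hcov
  set Φ : Set (Iio κ.ord) → (↥W × ↥(Iio κ.ord)) :=
    fun x => (⟨gf x, hgW x⟩, ⟨βf x, hβf x⟩) with hΦ
  have hfiber : ∀ p : ↥W × ↥(Iio κ.ord), #{x : Set (Iio κ.ord) // Φ x = p} ≤ (n : Cardinal.{1}) := by
    intro p
    by_contra hgt
    have hle : (n : Cardinal.{1}) ≤ #{x : Set (Iio κ.ord) // Φ x = p} :=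
      (lt_of_not_ge hgt).le
    have hle2 : #(ULift.{1} (Fin n)) ≤ #{x : Set (Iio κ.ord) // Φ x = p} := by
      rwa [Cardinal.mk_uLift, Cardinal.mk_fin, Cardinal.lift_natCast]
    obtain ⟨e⟩ := (Cardinal.le_def _ _).mp hle2
    set u : Fin n → Set (Iio κ.ord) := fun k => (e ⟨k⟩).1 with hu
    have huinj : Function.Injective u := by
      intro a a' haa'
      have : e ⟨a⟩ = e ⟨a'⟩ := Subtype.ext haa'
      have := e.injective this
      simpa using congrArg ULift.down this
    have hgp : ∀ α < κ.ord, (p.1 : Ordinal.{0} → Ordinal.{0}) α < b α :=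
      fun α hα => ((hW p.1.2) α).1 hα
    apply key_not_all hκ hn ι hι hgp p.2.2 huinj
    intro k α h1 h2
    have hΦk : Φ (u k) = p := (e ⟨k⟩).2
    have hg_eq : gf (u k) = (p.1 : Ordinal.{0} → Ordinal.{0}) := by
      have := congrArg (fun q => (q.1 : Ordinal.{0} → Ordinal.{0})) hΦk
      simpa [hΦ] using this
    have hβ_eq : βf (u k) = ((p.2 : ↥(Iio κ.ord)) : Ordinal) := by
      have := congrArg (fun q => ((q.2 : ↥(Iio κ.ord)) : Ordinal)) hΦk
      simpa [hΦ] using this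
    have := hprop (u k) α (by rwa [hβ_eq]) h2
    rwa [hg_eq] at this
  have htot : (2 : Cardinal.{1}) ^ Cardinal.lift.{1} κ ≤ #(↥W × ↥(Iio κ.ord)) * n := by
    have hX : #(Set (Iio κ.ord)) = (2 : Cardinal.{1}) ^ Cardinal.lift.{1} κ := by
      rw [Cardinal.mk_set, Ordinal.mk_Iio_ordinal, Cardinal.card_ord]
    calc (2 : Cardinal.{1}) ^ Cardinal.lift.{1} κ = #(Set (Iio κ.ord)) := hX.symm
      _ = #((p : ↥W × ↥(Iio κ.ord)) × {x : Set (Iio κ.ord) // Φ x = p}) :=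
          (mk_congr (Equiv.sigmaFiberEquiv Φ)).symm
      _ = Cardinal.sum fun p => #{x : Set (Iio κ.ord) // Φ x = p} := Cardinal.mk_sigma _
      _ ≤ Cardinal.sum fun _ : ↥W × ↥(Iio κ.ord) => (n : Cardinal.{1}) :=
          Cardinal.sum_le_sum _ _ hfiber
      _ = #(↥W × ↥(Iio κ.ord)) * n := Cardinal.sum_const' _ _
  set μ : Cardinal.{1} := max (max #↥W (Cardinal.lift.{1} κ)) ℵ₀ with hμ
  have hμinf : ℵ₀ ≤ μ := le_max_right _ _
  have hμlt : μ < Cardinal.lift.{1} (2 ^ κ) := by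
    rw [hμ, h2κ]
    apply max_lt (max_lt _ _) _
    · rwa [← h2κ]
    · exact Cardinal.cantor _
    · exact lt_of_le_of_lt haleph (Cardinal.cantor _)
  have hfinal : (2 : Cardinal.{1}) ^ Cardinal.lift.{1} κ ≤ μ := by
    refine htot.trans ?_
    have h1 : #(↥W × ↥(Iio κ.ord)) ≤ μ := by
      rw [Cardinal.mk_prod, Cardinal.lift_id, Cardinal.lift_id, Ordinal.mk_Iio_ordinal,
        Cardinal.card_ord]
      calc #↥W * Cardinal.lift.{1} κ ≤ μ * μ :=
            mul_le_mul' ((le_max_left _ _).trans (le_max_left _ _))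
              ((le_max_right _ _).trans (le_max_left _ _))
        _ = μ := Cardinal.mul_eq_self hμinf
    have h2 : (n : Cardinal.{1}) ≤ μ := (nat_lt_aleph0 n).le.trans hμinf
    calc #(↥W × ↥(Iio κ.ord)) * n ≤ μ * μ := mul_le_mul' h1 h2
      _ = μ := Cardinal.mul_eq_self hμinf
  rw [← h2κ] at hfinal
  exact absurd hfinal (not_le.mpr hμlt)

end Stmt10Key
section Stmt10Upper

lemma mk_prodSet_le {κ : Cardinal.{0}} (hκ : ℵ₀ ≤ κ) {b : Ordinal.{0} → Ordinal.{0}}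
    (hb : ∀ α < κ.ord, b α < κ.ord) :
    #(prodSet κ.ord b) ≤ Cardinal.lift.{1} (2 ^ κ) := by
  have h1 : #(prodSet κ.ord b) ≤ #(↥(Iio κ.ord) → ↥(Iio κ.ord)) := by
    apply Cardinal.mk_le_of_injective
      (f := fun f (i : ↥(Iio κ.ord)) =>
        (⟨f.1 i, lt_trans ((f.2 i).1 i.2) (hb i i.2)⟩ : ↥(Iio κ.ord)))
    intro f f' hff'
    apply Subtype.ext
    funext α
    by_cases hα : α < κ.ord
    · have := congrFun hff' ⟨α, hα⟩
      exact Subtype.ext_iff.mp this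
    · rw [(f.2 α).2 hα, (f'.2 α).2 hα]
  have h2 : #(↥(Iio κ.ord) → ↥(Iio κ.ord)) = Cardinal.lift.{1} (2 ^ κ) := by
    rw [← Cardinal.power_def, Ordinal.mk_Iio_ordinal, Cardinal.card_ord,
      Cardinal.power_self_eq (Cardinal.aleph0_le_lift.mpr hκ), Cardinal.lift_two_power]
  exact h1.trans h2.le

lemma cover_neq {κ : Cardinal.{0}} (hκ0 : (0:Ordinal) < κ.ord)
    {b : Ordinal.{0} → Ordinal.{0}} (hb : ∀ α < κ.ord, (2:Ordinal) ≤ b α) :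
    ∀ f ∈ prodSet κ.ord b, ∃ g ∈ prodSet κ.ord b, neStar κ.ord f g := by
  intro f _
  refine ⟨fun α => if α < κ.ord then (if f α = 0 then 1 else 0) else 0, ?_, ?_⟩
  · intro α
    constructor
    · intro hα
      dsimp only
      rw [if_pos hα]
      split_ifs with h
      · exact lt_of_lt_of_le (by norm_num) (hb α hα)
      · exact lt_of_lt_of_le (by norm_num) (hb α hα)
    · intro hα
      dsimp only
      rw [if_neg hα]
  · refine ⟨0, hκ0, fun α _ hα => ?_⟩
    dsimp only
    rw [if_pos hα]
    split_ifs with h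
    · rw [h]; norm_num
    · exact h

lemma cover_antiloc {κ : Cardinal.{0}} (hκ0 : (0:Ordinal) < κ.ord)
    {b h : Ordinal.{0} → Ordinal.{0}} (hbh : ∀ α < κ.ord, h α ≤ b α) :
    ∀ φ ∈ slalomSet κ.ord b h, ∃ f ∈ prodSet κ.ord b, notInStar κ.ord φ f := by
  intro φ hφ
  have hne : ∀ α, α < κ.ord → ∃ x, x < b α ∧ x ∉ φ α := by
    intro α hα
    by_contra hcon
    push_neg at hcon
    have hsub : Iio (b α) ⊆ φ α := fun x hx => hcon x hx
    have h1 := (hφ α).1 hα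
    have heq : φ α = Iio (b α) := Subset.antisymm h1.1 hsub
    have h2 : #(φ α) = Cardinal.lift.{1} (b α).card := by
      rw [heq, Ordinal.mk_Iio_ordinal]
    have h3 : Cardinal.lift.{1} (h α).card ≤ Cardinal.lift.{1} (b α).card :=
      Cardinal.lift_le.mpr (Ordinal.card_le_card (hbh α hα))
    rw [h2] at h1
    exact absurd h1.2 (not_lt.mpr h3)
  classical
  refine ⟨fun α => if hα : α < κ.ord then (hne α hα).choose else 0, ?_, ?_⟩
  · intro α
    constructor
    · intro hα
      dsimp only
      rw [dif_pos hα]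
      exact (hne α hα).choose_spec.1
    · intro hα
      dsimp only
      rw [dif_neg hα]
  · refine ⟨0, hκ0, fun α _ hα => ?_⟩
    dsimp only
    rw [dif_pos hα]
    exact (hne α hα).choose_spec.2

lemma normOf_eq_of {X Y : Type*} (Xs : Set X) (Ys : Set Y) (R : X → Y → Prop) (c : Cardinal)
    (hmem : ∃ W, W ⊆ Ys ∧ (∀ x ∈ Xs, ∃ y ∈ W, R x y) ∧ #W ≤ c)
    (hlb : ∀ W, W ⊆ Ys → (∀ x ∈ Xs, ∃ y ∈ W, R x y) → c ≤ #W) :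
    normOf Xs Ys R = c := by
  obtain ⟨W, h1, h2, h3⟩ := hmem
  have hWc : #W = c := le_antisymm h3 (hlb W h1 h2)
  unfold normOf
  apply le_antisymm
  · have hmem2 : c ∈ {c | ∃ W, W ⊆ Ys ∧ (∀ x ∈ Xs, ∃ y ∈ W, R x y) ∧ c = #W} :=
      ⟨W, h1, h2, hWc.symm⟩
    exact csInf_le' hmem2
  · refine le_csInf ⟨#W, ⟨W, h1, h2, rfl⟩⟩ ?_
    rintro d ⟨W', hs, hc, rfl⟩
    exact hlb W' hs hc

end Stmt10Upper
/-- If `{α < κ : b α < ℵ₀}` is cofinal in `κ`, then `d_κ^b(≠^∞) = 2^κ` and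
`d_κ^{b,h}(∌^∞) = 2^κ` for every `h` with `2 ≤ h α ≤ b α`. -/
theorem stmt10 (κ : Cardinal.{0}) (hκ : κ.IsInaccessible)
    (b : Ordinal.{0} → Ordinal.{0})
    (hb : ∀ α < κ.ord, 2 ≤ b α ∧ b α < κ.ord)
    (hfin : Cofinally κ.ord (fun α => b α < Ordinal.omega0)) :
    dNeq κ.ord b = Cardinal.lift.{1} (2 ^ κ) ∧
    ∀ h : Ordinal.{0} → Ordinal.{0}, (∀ α < κ.ord, 2 ≤ h α ∧ h α ≤ b α) →
      dAntiLoc κ.ord b h = Cardinal.lift.{1} (2 ^ κ) := by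
  have hale : ℵ₀ ≤ κ := hκ.1.le
  have hκ0 : (0:Ordinal) < κ.ord := by
    rw [Cardinal.lt_ord]
    simpa using aleph0_pos.trans_le hale
  have hb2 : ∀ α < κ.ord, (2:Ordinal) ≤ b α := fun α hα => (hb α hα).1
  have hblt : ∀ α < κ.ord, b α < κ.ord := fun α hα => (hb α hα).2
  obtain ⟨n, hn2, hcofn⟩ := exists_nstar hκ hb2 hfin
  obtain ⟨e⟩ := (Cardinal.le_def _ _).mp ((mk_IdxT_le hκ n).trans (lift_le_mk_T hκ hcofn))
  set ι : IdxT κ.ord n ↪ ↥(Iio κ.ord) :=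
    e.trans (Function.Embedding.subtype _) with hιdef
  have hι : ∀ r, b ((ι r : ↥(Iio κ.ord)) : Ordinal) = (n : Ordinal) := fun r => (e r).2
  constructor
  · unfold dNeq
    apply normOf_eq_of
    · exact ⟨prodSet κ.ord b, subset_rfl, cover_neq hκ0 hb2, mk_prodSet_le hale hblt⟩
    · intro W hWs hWc
      apply key_card hκ hn2 ι hι hWs
      intro x
      obtain ⟨g, hgW, β, hβ, hp⟩ :=
        hWc (FF κ.ord n ι x) (FF_mem_prodSet hb2 (by omega) ι hι x)
      exact ⟨g, hgW, β, hβ, hp⟩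
  · intro h hh
    unfold dAntiLoc
    apply normOf_eq_of
    · exact ⟨prodSet κ.ord b, subset_rfl, cover_antiloc hκ0 (fun α hα => (hh α hα).2),
        mk_prodSet_le hale hblt⟩
    · intro W hWs hWc
      apply key_card hκ hn2 ι hι hWs
      intro x
      have hFmem := FF_mem_prodSet hb2 (by omega : 0 < n) ι hι x
      have hφ : (fun α => if α < κ.ord then {FF κ.ord n ι x α} else (∅ : Set Ordinal.{0})) ∈
          slalomSet κ.ord b h := by
        intro α
        constructor
        · intro hα
          dsimp only
          rw [if_pos hα]
          constructor
          · rw [singleton_subset_iff]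
            exact (hFmem α).1 hα
          · rw [Cardinal.mk_singleton]
            have h2 : (2:Ordinal) ≤ h α := (hh α hα).1
            have h3 : (2:Cardinal.{0}) ≤ (h α).card := by
              have := Ordinal.card_le_card h2
              simpa using this
            rw [Cardinal.one_lt_lift_iff]
            exact lt_of_lt_of_le one_lt_two h3
        · intro hα
          dsimp only
          rw [if_neg hα]
      obtain ⟨f, hfW, β, hβ, hp⟩ := hWc _ hφ
      refine ⟨f, hfW, β, hβ, fun α h1 h2 => ?_⟩
      have h3 := hp α h1 h2
      dsimp only at h3
      rw [if_pos h2] at h3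
      simp only [mem_singleton_iff] at h3
      exact fun hcontra => h3 hcontra.symm

end BGBS
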